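/- Let (β,γ) be antiferromagnetic, let λ, λ₁, λ₂ > 0, and let (a,b,c) be a vertex-edge observable. Let G = (V,E) be a finite graph and S ⊆ V. For i ∈ {1,2}, let 𝛌_i be the vertex-activity vector on V assigning activity λ_i to every v ∈ S and activity λ to every v ∈ V∖S, and let μ_i be the Gibbs distribution on G with parameters β, γ, 𝛌_i. Then for every subgraph F of G it holds that |E_{σ∼μ₂}[o_F(σ)] − E_{σ∼μ₁}[o_F(σ)]| ≤ 2(|a|+|b|+|c|)(|V|² + |E|²) · |λ₂/λ₁ − 1|. -/

import Mathlib

open Finset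
attribute [local instance] Classical.propDecidable
noncomputable section

/-- The finset of edges of a graph on a finite vertex type. -/
def edgeFin {V : Type} [Fintype V] (G : SimpleGraph V) : Finset (Sym2 V) :=
  G.edgeSet.toFinite.toFinset

/-- `|σ|`: the number of vertices that get spin 1 (`true`). -/
def nOnes {V : Type} [Fintype V] (σ : V → Bool) : ℕ :=
  (univ.filter fun v => σ v = true).card

/-- `m_s(σ)`: the number of edges in `E` both of whose endpoints get spin `s`. -/
def mB {V : Type} (E : Finset (Sym2 V)) (σ : V → Bool) (s : Bool) : ℕ :=
  (E.filter fun e => e.map σ = Sym2.diag s).card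

/-- The 2-spin weight `λ^|σ| β^{m₀(σ)} γ^{m₁(σ)}`. -/
def w2 {V : Type} [Fintype V] (G : SimpleGraph V) (β γ lam : ℝ) (σ : V → Bool) : ℝ :=
  lam ^ nOnes σ * β ^ mB (edgeFin G) σ false * γ ^ mB (edgeFin G) σ true

/-- The `(a,b,c)` vertex-edge observable evaluated on vertex set `Vs` and edge set `Es`:
`a|σ| + b m₀(σ) + c m₁(σ)`. -/
def obsVal {V : Type} (a b c : ℝ) (Vs : Finset V) (Es : Finset (Sym2 V)) (σ : V → Bool) : ℝ :=
  a * (Vs.filter fun v => σ v = true).card + b * mB Es σ false + c * mB Es σ true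

/-- `(β,γ)` is antiferromagnetic: `βγ < 1` (with `β,γ ≥ 0`) and at least one is nonzero. -/
def Antiferro (β γ : ℝ) : Prop := 0 ≤ β ∧ 0 ≤ γ ∧ β * γ < 1 ∧ (β ≠ 0 ∨ γ ≠ 0)

/-- Expectation of `f` under the distribution proportional to the weights `w`. -/
def gExp {S : Type} [Fintype S] (w f : S → ℝ) : ℝ :=
  (∑ σ : S, w σ * f σ) / ∑ σ : S, w σ

/-- Conditional expectation of `f` given the event `A`, under the distribution ∝ `w`. -/
def cExp {S : Type} [Fintype S] (w : S → ℝ) (A : S → Prop) (f : S → ℝ) : ℝ :=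
  (∑ σ ∈ univ.filter A, w σ * f σ) / ∑ σ ∈ univ.filter A, w σ

/-- Probability of the event `A` under the distribution ∝ `w`. -/
def prW {S : Type} [Fintype S] (w : S → ℝ) (A : S → Prop) : ℝ :=
  (∑ σ ∈ univ.filter A, w σ) / ∑ σ : S, w σ

/-- Conditional probability of `A` given `B` under the distribution ∝ `w`. -/
def cprW {S : Type} [Fintype S] (w : S → ℝ) (A B : S → Prop) : ℝ :=
  (∑ σ ∈ univ.filter (fun σ => A σ ∧ B σ), w σ) / ∑ σ ∈ univ.filter B, w σ

/-- The degree of a vertex. -/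
def deg {V : Type} [Fintype V] (G : SimpleGraph V) (v : V) : ℕ :=
  (univ.filter fun w => G.Adj v w).card

/-- The graph obtained from a tree `T` by attaching a distinct 4-cycle at each
vertex in `S` (identifying the vertex with one vertex of the cycle). -/
def attach4 {W : Type} (T : SimpleGraph W) (S : Set W) : SimpleGraph (W ⊕ (↥S × Fin 3)) :=
  SimpleGraph.fromRel fun x y =>
    match x, y with
    | Sum.inl w, Sum.inl w' => T.Adj w w'
    | Sum.inl w, Sum.inr (s, i) => w = s.val ∧ (i = 0 ∨ i = 2)
    | Sum.inr _, Sum.inl _ => False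
    | Sum.inr (s, i), Sum.inr (s', j) => s = s' ∧ ((i = 0 ∧ j = 1) ∨ (i = 1 ∧ j = 2))

/-- A field gadget: a rooted tree whose root has degree one; when `λ = (1-β)/(1-γ)`,
it may instead be obtained from such a rooted tree by replacing some (non-root) leaves
with distinct cycles of length four. -/
def IsFieldGadget (β γ lam : ℝ) {X : Type} (G : SimpleGraph X) (ρ : X) : Prop :=
  (∃! u, G.Adj ρ u) ∧
  (G.IsTree ∨
    (lam = (1 - β) / (1 - γ) ∧
      ∃ (W : Type) (T : SimpleGraph W) (S : Set W) (ρ' : W),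
        ∃ e : G ≃g attach4 T S,
        T.IsTree ∧ (∀ s ∈ S, s ≠ ρ' ∧ (∃! y, T.Adj s y)) ∧ e ρ = Sum.inl ρ'))

/-- The effective field `R_𝒯 = (1/λ) μ(σ ρ = 1)/μ(σ ρ = 0)` of a field gadget. -/
def Rf {V : Type} [Fintype V] (T : SimpleGraph V) (β γ lam : ℝ) (ρ : V) : ℝ :=
  (1 / lam) *
    (prW (w2 T β γ lam) (fun σ => σ ρ = true) / prW (w2 T β γ lam) (fun σ => σ ρ = false))

/-- The observable gap `O_𝒯 = E[o_𝒯 | σρ = 1] - a - E[o_𝒯 | σρ = 0]` of a field gadget. -/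
def Og {V : Type} [Fintype V] (a b c : ℝ) (T : SimpleGraph V) (β γ lam : ℝ) (ρ : V) : ℝ :=
  cExp (w2 T β γ lam) (fun σ => σ ρ = true) (obsVal a b c univ (edgeFin T)) - a -
    cExp (w2 T β γ lam) (fun σ => σ ρ = false) (obsVal a b c univ (edgeFin T))

/-- The 2-spin weight with a vertex-activity vector `lamv`:
`β^{m₀(σ)} γ^{m₁(σ)} ∏_{v : σ(v)=1} λ_v`. -/
def w2vec {V : Type} [Fintype V] (G : SimpleGraph V) (β γ : ℝ) (lamv : V → ℝ)
    (σ : V → Bool) : ℝ :=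
  β ^ mB (edgeFin G) σ false * γ ^ mB (edgeFin G) σ true *
    ∏ v ∈ univ.filter (fun v => σ v = true), lamv v

/-- stability of the expected observable value on a subgraph `F` under a
perturbation of the vertex activities on a set `S` of vertices. -/
lemma one_sub_pow_le_aux (t : ℝ) (ht0 : 0 ≤ t) (ht1 : t ≤ 1) (k n : ℕ) (hk : k ≤ n) :
    1 - t ^ k ≤ n * (1 - t) := by
  have h : ∀ j : ℕ, 1 - t ^ j ≤ j * (1 - t) := by
    intro j
    induction j with
    | zero => simp
    | succ j ih =>
      have hp : t ^ j ≤ 1 := pow_le_one₀ ht0 ht1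
      have : 1 - t ^ (j+1) = (1 - t) + t * (1 - t ^ j) := by ring
      push_cast
      nlinarith [mul_le_mul_of_nonneg_left ih ht0]
  calc 1 - t ^ k ≤ k * (1 - t) := h k
    _ ≤ n * (1 - t) := by
        have hc : (k:ℝ) ≤ n := by exact_mod_cast hk
        nlinarith

lemma gExp_ratio_bound {Ω : Type} [Fintype Ω] (w : Ω → ℝ) (hw : ∀ σ, 0 ≤ w σ)
    (hZ : 0 < ∑ σ : Ω, w σ) (k : Ω → ℕ) (n : ℕ) (hk : ∀ σ, k σ ≤ n)
    (r : ℝ) (hr : 1 ≤ r) (f : Ω → ℝ) (B : ℝ) (hB : 0 ≤ B) (hf : ∀ σ, |f σ| ≤ B) :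
    |gExp (fun σ => w σ * r ^ k σ) f - gExp w f| ≤ 2 * B * n * (1 - 1/r) := by
  have hr0 : 0 < r := lt_of_lt_of_le one_pos hr
  set Z₁ := ∑ σ : Ω, w σ with hZ1def
  set Z₂ := ∑ σ : Ω, w σ * r ^ k σ with hZ2def
  have hpow1 : ∀ σ, (1:ℝ) ≤ r ^ k σ := fun σ => one_le_pow₀ hr
  have hle : Z₁ ≤ Z₂ := Finset.sum_le_sum (fun σ _ => by nlinarith [hpow1 σ, hw σ])
  have hZ2 : 0 < Z₂ := lt_of_lt_of_le hZ hle
  set E₁ := gExp w f with hE1def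
  have hE1 : ∑ σ : Ω, w σ * f σ = E₁ * Z₁ := by
    rw [hE1def, gExp]; exact (div_mul_cancel₀ _ hZ.ne').symm
  have hE1B : |E₁| ≤ B := by
    rw [hE1def, gExp, abs_div, abs_of_pos hZ, div_le_iff₀ hZ]
    calc |∑ σ : Ω, w σ * f σ| ≤ ∑ σ : Ω, |w σ * f σ| := Finset.abs_sum_le_sum_abs _ _
      _ ≤ ∑ σ : Ω, w σ * B := Finset.sum_le_sum (fun σ _ => by
          rw [abs_mul, abs_of_nonneg (hw σ)]
          exact mul_le_mul_of_nonneg_left (hf σ) (hw σ))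
      _ = B * Z₁ := by rw [← Finset.sum_mul]; ring
  -- pointwise power bound
  set C := (n:ℝ) * (1 - 1/r) with hCdef
  have hC0 : 0 ≤ C := by
    have : 1/r ≤ 1 := by rw [div_le_one hr0]; exact hr
    have : (0:ℝ) ≤ 1 - 1/r := by linarith
    positivity
  have hpow : ∀ σ, r ^ k σ - 1 ≤ C * r ^ k σ := by
    intro σ
    have h1 : 1 - (1/r) ^ k σ ≤ (n:ℝ) * (1 - 1/r) :=
      one_sub_pow_le_aux (1/r) (by positivity) (by rw [div_le_one hr0]; exact hr) _ _ (hk σ)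
    have hrk : 0 < r ^ k σ := pow_pos hr0 _
    have hcancel : r ^ k σ * (1/r) ^ k σ = 1 := by
      rw [← mul_pow]; field_simp; exact one_pow _
    nlinarith [mul_le_mul_of_nonneg_left h1 (le_of_lt hrk)]
  -- the key identity
  have expand : ∑ σ : Ω, w σ * (r ^ k σ - 1) * (f σ - E₁)
      = (∑ σ : Ω, w σ * r ^ k σ * f σ) - E₁ * Z₂ := by
    have h1 : ∑ σ : Ω, w σ * (r ^ k σ - 1) * (f σ - E₁)
        = (∑ σ : Ω, w σ * r ^ k σ * f σ) - (∑ σ : Ω, w σ * f σ)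
          - E₁ * Z₂ + E₁ * Z₁ := by
      rw [hZ2def, hZ1def, Finset.mul_sum, Finset.mul_sum, ← Finset.sum_sub_distrib,
        ← Finset.sum_sub_distrib, ← Finset.sum_add_distrib]
      exact Finset.sum_congr rfl fun σ _ => by ring
    rw [h1, hE1]; ring
  have key : gExp (fun σ => w σ * r ^ k σ) f - E₁
      = (∑ σ : Ω, w σ * (r ^ k σ - 1) * (f σ - E₁)) / Z₂ := by
    rw [expand, gExp]
    have : ∑ σ : Ω, (fun σ => w σ * r ^ k σ) σ * f σ = ∑ σ : Ω, w σ * r ^ k σ * f σ := rfl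
    rw [this]
    have : ∑ σ : Ω, (fun σ => w σ * r ^ k σ) σ = Z₂ := rfl
    rw [this, sub_div]
    congr 1
    field_simp
  rw [key, abs_div, abs_of_pos hZ2, div_le_iff₀ hZ2]
  calc |∑ σ : Ω, w σ * (r ^ k σ - 1) * (f σ - E₁)|
      ≤ ∑ σ : Ω, |w σ * (r ^ k σ - 1) * (f σ - E₁)| := Finset.abs_sum_le_sum_abs _ _
    _ ≤ ∑ σ : Ω, w σ * (C * r ^ k σ) * (2 * B) := by
        apply Finset.sum_le_sum
        intro σ _
        rw [abs_mul, abs_mul, abs_of_nonneg (hw σ),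
          abs_of_nonneg (by linarith [hpow1 σ] : (0:ℝ) ≤ r ^ k σ - 1)]
        have hfb : |f σ - E₁| ≤ 2 * B := by
          calc |f σ - E₁| ≤ |f σ| + |E₁| := abs_sub _ _
            _ ≤ 2 * B := by linarith [hf σ, hE1B]
        have h1 : w σ * (r ^ k σ - 1) ≤ w σ * (C * r ^ k σ) :=
          mul_le_mul_of_nonneg_left (hpow σ) (hw σ)
        have h2 : 0 ≤ w σ * (C * r ^ k σ) :=
          mul_nonneg (hw σ) (mul_nonneg hC0 (pow_pos hr0 _).le)
        exact mul_le_mul h1 hfb (abs_nonneg _) h2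
    _ = C * (2 * B) * Z₂ := by
        rw [hZ2def, Finset.mul_sum]
        exact Finset.sum_congr rfl fun σ _ => by ring
    _ = 2 * B * ↑n * (1 - 1/r) * Z₂ := by rw [hCdef]; ring


set_option maxHeartbeats 1000000 in
theorem stmt_1 {V : Type} [Fintype V] (β γ : ℝ) (hA : Antiferro β γ)
    (lam lam₁ lam₂ : ℝ) (hlam : 0 < lam) (hlam₁ : 0 < lam₁) (hlam₂ : 0 < lam₂)
    (a b c : ℝ) (G : SimpleGraph V) (S : Set V) (F : G.Subgraph)
    (l₁ l₂ : V → ℝ)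
    (hl₁ : ∀ v, l₁ v = if v ∈ S then lam₁ else lam)
    (hl₂ : ∀ v, l₂ v = if v ∈ S then lam₂ else lam) :
    |gExp (w2vec G β γ l₂) (obsVal a b c F.verts.toFinite.toFinset F.edgeSet.toFinite.toFinset) -
        gExp (w2vec G β γ l₁)
          (obsVal a b c F.verts.toFinite.toFinset F.edgeSet.toFinite.toFinset)| ≤
      2 * (|a| + |b| + |c|) * ((Fintype.card V : ℝ) ^ 2 + ((edgeFin G).card : ℝ) ^ 2) *
        |lam₂ / lam₁ - 1|     := by
  classical
  obtain ⟨hβ, hγ, hβγ, hne⟩ := hA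
  set Vs := F.verts.toFinite.toFinset with hVs
  set Es := F.edgeSet.toFinite.toFinset with hEs
  set n := Fintype.card V with hn
  set m := (edgeFin G).card with hm
  set B : ℝ := |a| * n + (|b| + |c|) * m with hBdef
  have hB0 : 0 ≤ B := by positivity
  have hEsub : Es ⊆ edgeFin G := by
    intro e he
    rw [hEs, Set.Finite.mem_toFinset] at he
    rw [edgeFin, Set.Finite.mem_toFinset]
    exact F.edgeSet_subset he
  have hfB : ∀ σ : V → Bool, |obsVal a b c Vs Es σ| ≤ B := by
    intro σ
    have h1 : ((Vs.filter fun v => σ v = true).card : ℝ) ≤ n := by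
      exact_mod_cast (Finset.card_filter_le Vs _).trans (Finset.card_le_univ Vs)
    have h2 : (mB Es σ false : ℝ) ≤ m := by
      exact_mod_cast (Finset.card_filter_le Es _).trans (Finset.card_le_card hEsub)
    have h3 : (mB Es σ true : ℝ) ≤ m := by
      exact_mod_cast (Finset.card_filter_le Es _).trans (Finset.card_le_card hEsub)
    have hX0 : (0:ℝ) ≤ ((Vs.filter fun v => σ v = true).card : ℝ) := Nat.cast_nonneg _
    have hY0 : (0:ℝ) ≤ (mB Es σ false : ℝ) := Nat.cast_nonneg _
    have hZ0 : (0:ℝ) ≤ (mB Es σ true : ℝ) := Nat.cast_nonneg _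
    have habs : |obsVal a b c Vs Es σ| ≤
        |a| * ((Vs.filter fun v => σ v = true).card : ℝ) + |b| * (mB Es σ false : ℝ)
          + |c| * (mB Es σ true : ℝ) := by
      rw [obsVal]
      have t1 := abs_add_le (a * ((Vs.filter fun v => σ v = true).card : ℝ)
        + b * (mB Es σ false : ℝ)) (c * (mB Es σ true : ℝ))
      have t2 := abs_add_le (a * ((Vs.filter fun v => σ v = true).card : ℝ))
        (b * (mB Es σ false : ℝ))
      have e1 : |a * ((Vs.filter fun v => σ v = true).card : ℝ)|
          = |a| * ((Vs.filter fun v => σ v = true).card : ℝ) := by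
        rw [abs_mul, abs_of_nonneg hX0]
      have e2 : |b * (mB Es σ false : ℝ)| = |b| * (mB Es σ false : ℝ) := by
        rw [abs_mul, abs_of_nonneg hY0]
      have e3 : |c * (mB Es σ true : ℝ)| = |c| * (mB Es σ true : ℝ) := by
        rw [abs_mul, abs_of_nonneg hZ0]
      linarith
    rw [hBdef]
    nlinarith [mul_le_mul_of_nonneg_left h1 (abs_nonneg a),
      mul_le_mul_of_nonneg_left h2 (abs_nonneg b),
      mul_le_mul_of_nonneg_left h3 (abs_nonneg c)]
  -- positivity of weights
  have hl₁pos : ∀ v, 0 < l₁ v := by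
    intro v; rw [hl₁]; split <;> [exact hlam₁; exact hlam]
  have hl₂pos : ∀ v, 0 < l₂ v := by
    intro v; rw [hl₂]; split <;> [exact hlam₂; exact hlam]
  have wnn : ∀ (l : V → ℝ), (∀ v, 0 < l v) → ∀ σ, 0 ≤ w2vec G β γ l σ := by
    intro l hl σ
    rw [w2vec]
    have hp : 0 < ∏ v ∈ univ.filter (fun v => σ v = true), l v :=
      Finset.prod_pos (fun v _ => hl v)
    exact mul_nonneg (mul_nonneg (pow_nonneg hβ _) (pow_nonneg hγ _)) hp.le
  have wpos : ∀ (l : V → ℝ), (∀ v, 0 < l v) → 0 < ∑ σ : V → Bool, w2vec G β γ l σ := by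
    intro l hl
    apply Finset.sum_pos' (fun σ _ => wnn l hl σ)
    rcases hne with hb | hc
    · refine ⟨fun _ => false, Finset.mem_univ _, ?_⟩
      have hβ0 : 0 < β := lt_of_le_of_ne hβ (Ne.symm hb)
      have hmb : mB (edgeFin G) (fun _ => false) true = 0 := by
        rw [mB, Finset.card_eq_zero, Finset.filter_eq_empty_iff]
        intro e _
        induction e using Sym2.ind with
        | _ x y => simp [Sym2.diag]
      rw [w2vec, hmb]
      simp only [pow_zero, mul_one]
      have : (univ.filter fun v => (fun _ : V => false) v = true) = (∅ : Finset V) := by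
        simp
      rw [this, Finset.prod_empty]
      simpa using pow_pos hβ0 (mB (edgeFin G) (fun _ => false) false)
    · refine ⟨fun _ => true, Finset.mem_univ _, ?_⟩
      have hγ0 : 0 < γ := lt_of_le_of_ne hγ (Ne.symm hc)
      have hmb : mB (edgeFin G) (fun _ => true) false = 0 := by
        rw [mB, Finset.card_eq_zero, Finset.filter_eq_empty_iff]
        intro e _
        induction e using Sym2.ind with
        | _ x y => simp [Sym2.diag]
      rw [w2vec, hmb]
      simp only [pow_zero, one_mul]
      have hp : 0 < ∏ v ∈ univ.filter (fun v => (fun _ : V => true) v = true), l v :=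
        Finset.prod_pos (fun v _ => hl v)
      exact mul_pos (pow_pos hγ0 _) hp
  -- the ratio identity
  set k : (V → Bool) → ℕ := fun σ => (univ.filter (fun v => σ v = true ∧ v ∈ S)).card
    with hkdef
  have hk : ∀ σ, k σ ≤ n := by
    intro σ
    rw [hkdef]
    calc (univ.filter (fun v => σ v = true ∧ v ∈ S)).card
        ≤ (univ : Finset V).card := Finset.card_filter_le _ _
      _ = n := Finset.card_univ
  have ratio : ∀ (p q : ℝ), p ≠ 0 → ∀ (lp lq : V → ℝ),
      (∀ v, lp v = if v ∈ S then p else lam) → (∀ v, lq v = if v ∈ S then q else lam) →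
      ∀ σ, w2vec G β γ lq σ = w2vec G β γ lp σ * (q/p) ^ k σ := by
    intro p q hp lp lq hlp hlq σ
    rw [w2vec, w2vec]
    have key : ∀ (x : ℝ),
        (∏ v ∈ univ.filter (fun v => σ v = true), (if v ∈ S then x else lam))
          = x ^ k σ * lam ^ ((univ.filter (fun v => σ v = true)).filter
              (fun v => ¬ v ∈ S)).card := by
      intro x
      rw [Finset.prod_ite, Finset.prod_const, Finset.prod_const, Finset.filter_filter]
    have hlqe : (∏ v ∈ univ.filter (fun v => σ v = true), lq v)
        = (∏ v ∈ univ.filter (fun v => σ v = true), (if v ∈ S then q else lam)) :=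
      Finset.prod_congr rfl (fun v _ => hlq v)
    have hlpe : (∏ v ∈ univ.filter (fun v => σ v = true), lp v)
        = (∏ v ∈ univ.filter (fun v => σ v = true), (if v ∈ S then p else lam)) :=
      Finset.prod_congr rfl (fun v _ => hlp v)
    rw [hlqe, hlpe, key q, key p, div_pow]
    field_simp [pow_ne_zero _ hp]
  -- combine
  set r := lam₂ / lam₁ with hr
  have hBn : B * n ≤ (|a| + |b| + |c|) * ((n:ℝ)^2 + (m:ℝ)^2) := by
    have hnn : (0:ℝ) ≤ (n:ℝ) := Nat.cast_nonneg _
    have hmn : (0:ℝ) ≤ (m:ℝ) := Nat.cast_nonneg _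
    nlinarith [sq_nonneg ((n:ℝ) - (m:ℝ)), abs_nonneg a, abs_nonneg b, abs_nonneg c,
      mul_nonneg hnn hmn]
  rcases le_or_gt 1 r with hr1 | hr1
  · have heq : (fun σ => w2vec G β γ l₁ σ * r ^ k σ) = w2vec G β γ l₂ :=
      funext fun σ => (ratio lam₁ lam₂ hlam₁.ne' l₁ l₂ hl₁ hl₂ σ).symm
    have hbd := gExp_ratio_bound (w2vec G β γ l₁) (wnn l₁ hl₁pos) (wpos l₁ hl₁pos)
      k n hk r hr1 (obsVal a b c Vs Es) B hB0 hfB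
    rw [heq] at hbd
    refine hbd.trans ?_
    have hr0 : 0 < r := lt_of_lt_of_le one_pos hr1
    have h1 : 1 - 1/r ≤ |r - 1| := by
      rw [abs_of_nonneg (by linarith)]
      have hinv : r * (1/r) = 1 := by field_simp
      nlinarith [sq_nonneg (r - 1)]
    have h1' : 0 ≤ 1 - 1/r := by
      have : 1/r ≤ 1 := by rw [div_le_one hr0]; exact hr1
      linarith
    have habs0 : 0 ≤ |r - 1| := abs_nonneg _
    nlinarith [mul_le_mul hBn h1 h1' (by positivity :
      (0:ℝ) ≤ (|a| + |b| + |c|) * ((n:ℝ)^2 + (m:ℝ)^2))]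
  · have hr' : 1 ≤ lam₁ / lam₂ := by
      rw [le_div_iff₀ hlam₂]
      have := (div_lt_one hlam₁).mp hr1
      linarith
    have heq : (fun σ => w2vec G β γ l₂ σ * (lam₁/lam₂) ^ k σ) = w2vec G β γ l₁ :=
      funext fun σ => (ratio lam₂ lam₁ hlam₂.ne' l₂ l₁ hl₂ hl₁ σ).symm
    have hbd := gExp_ratio_bound (w2vec G β γ l₂) (wnn l₂ hl₂pos) (wpos l₂ hl₂pos)
      k n hk (lam₁/lam₂) hr' (obsVal a b c Vs Es) B hB0 hfB
    rw [heq, abs_sub_comm] at hbd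
    refine hbd.trans ?_
    have hinv : 1 / (lam₁ / lam₂) = r := by
      rw [one_div_div, hr]
    rw [hinv]
    have h1 : 1 - r = |r - 1| := by
      rw [abs_of_neg (by linarith)]; ring
    have h1' : 0 ≤ 1 - r := by linarith
    nlinarith [mul_le_mul_of_nonneg_right hBn h1',
      (by positivity : (0:ℝ) ≤ (|a| + |b| + |c|) * ((n:ℝ)^2 + (m:ℝ)^2))]
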